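/- Every direct union (directed colimit with injective maps) of m-uniformly amenable groups is m-uniformly amenable. In particular, a group that is the union of a directed family of m-uniformly amenable subgroups is m-uniformly amenable. -/

import Mathlib

open Pointwise

attribute [local instance] Classical.propDecidable

/-- A group is `m`-uniformly amenable for `m : ℝ_{>0} × ℕ → ℕ`. -/
def MUniformlyAmenable (m : ℝ → ℕ → ℕ) (G : Type*) [Group G] : Prop :=
  ∀ ε : ℝ, 0 < ε → ∀ S : Finset G,
    ∃ F : Finset G, F.Nonempty ∧ F.card ≤ m ε S.card ∧
      ((S * F).card : ℝ) ≤ (1 + ε) * F.card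

/-- A direct union of `m`-uniformly amenable groups is `m`-uniformly amenable: if a group
`G` is the union of a directed family of `m`-uniformly amenable subgroups, then `G` is
`m`-uniformly amenable. -/
theorem mUniformlyAmenable_directed_union {G : Type*} [Group G] (m : ℝ → ℕ → ℕ)
    {ι : Type*} [Nonempty ι] (H : ι → Subgroup G)
    (hdir : ∀ i j : ι, ∃ k : ι, H i ≤ H k ∧ H j ≤ H k)
    (hunion : ∀ g : G, ∃ i, g ∈ H i)
    (hH : ∀ i, MUniformlyAmenable m (H i)) :
    MUniformlyAmenable m G := by
  intro ε hε S
  -- find k with S ⊆ H k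
  have hk : ∃ k, ∀ s ∈ S, s ∈ H k := by
    classical
    induction S using Finset.induction with
    | empty => exact ⟨Classical.arbitrary ι, by simp⟩
    | @insert a s hx ih =>
      obtain ⟨k, hk⟩ := ih
      obtain ⟨i, hi⟩ := hunion a
      obtain ⟨j, hik, hjk⟩ := hdir i k
      exact ⟨j, by
        intro x hx'
        rcases Finset.mem_insert.mp hx' with h | h
        · exact hik (h ▸ hi)
        · exact hjk (hk x h)⟩
  obtain ⟨k, hk⟩ := hk
  classical
  set S' : Finset (H k) := S.subtype (· ∈ H k) with hS'
  have hmapS : S'.image ((H k).subtype) = S := by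
    ext x
    simp only [Finset.mem_image, hS', Finset.mem_subtype, Subgroup.coe_subtype]
    constructor
    · rintro ⟨⟨a, ha⟩, hmem, rfl⟩; exact hmem
    · intro hx; exact ⟨⟨x, hk x hx⟩, hx, rfl⟩
  have hinj : Function.Injective ((H k).subtype) := Subtype.val_injective
  have hcardS : S'.card = S.card := by
    rw [← hmapS, Finset.card_image_of_injective _ hinj]
  obtain ⟨F', hF'ne, hF'card, hF'bound⟩ := hH k ε hε S'
  refine ⟨F'.image ((H k).subtype), hF'ne.image _, ?_, ?_⟩
  · rw [Finset.card_image_of_injective _ hinj, ← hcardS]; exact hF'card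
  · have hmul : S * F'.image ((H k).subtype) = (S' * F').image ((H k).subtype) := by
      rw [Finset.image_mul, hmapS]
    rw [hmul, Finset.card_image_of_injective _ hinj,
      Finset.card_image_of_injective _ hinj]
    convert hF'bound using 6
    rfl
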